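/- In the setting of the previous statement, assume additionally Condition (C): for every probe index j ≤ p there is a set 𝓔_j of positive Lebesgue measure on which M̃_j(E) = Σ_{i>p} t_{ij}(E) > 0. Then there exists θ < 1 such that ‖F(X) − F(X')‖₁ ≤ θ‖X − X'‖₁ for all X, X' ∈ Σ; consequently the self-consistency equation F(X) = X has a unique solution in Σ. -/

import Mathlib

open MeasureTheory Set Finset
open scoped ENNReal NNReal

/-- The Fermi–Dirac distribution `f(E,β,μ) = (1 + exp(β(E-μ)))⁻¹`. -/
noncomputable def fermi (β μ E : ℝ) : ℝ := (1 + Real.exp (β * (E - μ)))⁻¹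

noncomputable def wfn (β lo hi E : ℝ) : ℝ :=
  Real.exp (β * (E - hi)) / (1 + Real.exp (β * (E - lo))) ^ 2

lemma fermi_pos (β c E : ℝ) : 0 < fermi β c E := by
  unfold fermi; positivity

lemma fermi_le_one (β c E : ℝ) : fermi β c E ≤ 1 := by
  unfold fermi
  rw [inv_le_one_iff₀]
  right; nlinarith [Real.exp_pos (β * (E - c))]

lemma fermi_mono {β c c' : ℝ} (hβ : 0 ≤ β) (h : c ≤ c') (E : ℝ) :
    fermi β c E ≤ fermi β c' E := by
  unfold fermi
  have h1 : Real.exp (β * (E - c')) ≤ Real.exp (β * (E - c)) :=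
    Real.exp_le_exp.2 (by nlinarith)
  have h2 : 0 < 1 + Real.exp (β * (E - c')) := by positivity
  gcongr

lemma wfn_pos (β lo hi E : ℝ) : 0 < wfn β lo hi E := by
  unfold wfn; positivity

lemma wfn_le (β lo hi E : ℝ) : wfn β lo hi E ≤ Real.exp (β * (2*lo - hi)) * Real.exp (-(β*E)) := by
  unfold wfn
  have h1 : (Real.exp (β * (E - lo))) ^ 2 ≤ (1 + Real.exp (β * (E - lo))) ^ 2 := by
    have := Real.exp_pos (β * (E - lo)); nlinarith
  have h2 : (0:ℝ) < (Real.exp (β * (E - lo))) ^ 2 := by positivity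
  calc Real.exp (β * (E - hi)) / (1 + Real.exp (β * (E - lo))) ^ 2
      ≤ Real.exp (β * (E - hi)) / (Real.exp (β * (E - lo))) ^ 2 := by
        gcongr
    _ = Real.exp (β * (2*lo - hi)) * Real.exp (-(β*E)) := by
        rw [sq, ← Real.exp_add, div_eq_iff (by positivity), ← Real.exp_add, ← Real.exp_add]
        ring_nf

lemma fermi_le_exp {β c : ℝ} (hβ : 0 < β) (hi : ℝ) (hc : c ≤ hi) (E : ℝ) :
    fermi β c E ≤ Real.exp (β * hi) * Real.exp (-(β*E)) := by
  unfold fermi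
  have h1 : Real.exp (β * (E - c)) ≤ 1 + Real.exp (β * (E - c)) := by
    linarith
  calc (1 + Real.exp (β * (E - c)))⁻¹ ≤ (Real.exp (β * (E - c)))⁻¹ := by
        gcongr
    _ = Real.exp (-(β * (E - c))) := by rw [Real.exp_neg]
    _ ≤ Real.exp (β * hi) * Real.exp (-(β*E)) := by
        rw [← Real.exp_add]
        apply Real.exp_le_exp.2
        nlinarith

lemma sandwich_alg {β s a b al ah G q : ℝ} (hβ : 0 < β) (hs : 0 ≤ s)
    (ha : 0 < a) (hb : 0 < b) (hal : 0 < al) (hah : 0 < ah) (hG : 0 < G)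
    (hq : 0 < q) (hba : a = b * q) (halG : al = ah * G)
    (hahb : ah ≤ b) (hba2 : b ≤ a) (haal : a ≤ al) (hG1 : 1 ≤ G)
    (key1 : β*s + 1 ≤ q) (key2 : (1 - β*s) * q ≤ 1) :
    β * G⁻¹ * s * (ah/(1+al)^2) ≤ (a-b)/((1+a)*(1+b)) ∧
    (a-b)/((1+a)*(1+b)) ≤ β * G^3 * s * (ah/(1+al)^2) := by
  have h1a : (0:ℝ) < 1 + a := by linarith
  have h1b : (0:ℝ) < 1 + b := by linarith
  have h1al : (0:ℝ) < 1 + al := by linarith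
  have hGi1 : G⁻¹ ≤ 1 := by
    rw [inv_le_one_iff₀]; right; exact hG1
  have hβs : 0 ≤ β * s := by positivity
  have hnum_lo : β * G⁻¹ * s * ah ≤ a - b := by
    calc β * G⁻¹ * s * ah ≤ β * 1 * s * b := by
          apply mul_le_mul _ hahb hah.le (by positivity)
          apply mul_le_mul_of_nonneg_right _ hs
          apply mul_le_mul_of_nonneg_left hGi1 hβ.le
      _ = β * s * b := by ring
      _ ≤ (q - 1) * b := mul_le_mul_of_nonneg_right (by linarith) hb.le
      _ = a - b := by rw [hba]; ring
  have hden : (1+a)*(1+b) ≤ (1+al)^2 := by nlinarith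
  have habpos : 0 ≤ a - b := by linarith
  constructor
  · rw [mul_div_assoc']
    exact div_le_div₀ habpos hnum_lo (by positivity) hden
  · rw [mul_div_assoc', div_le_div_iff₀ (by positivity) (by positivity)]
    have e1 : a - b ≤ β * s * a := by
      have h9 : q - 1 ≤ β * s * q := by nlinarith
      calc a - b = b * (q - 1) := by rw [hba]; ring
        _ ≤ b * (β * s * q) := mul_le_mul_of_nonneg_left h9 hb.le
        _ = β * s * (b * q) := by ring
        _ = β * s * a := by rw [← hba]
    have e2 : 1 + al ≤ G * (1 + a) := by nlinarith
    have e3 : 1 + al ≤ G * (1 + b) := by nlinarith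
    calc (a - b) * (1+al)^2 ≤ (β * s * a) * ((G*(1+a)) * (G*(1+b))) := by
          rw [sq]
          apply mul_le_mul e1 _ (by positivity) (by positivity)
          exact mul_le_mul e2 e3 h1al.le (by positivity)
      _ ≤ (β * s * (ah * G)) * ((G*(1+a)) * (G*(1+b))) := by
          rw [← halG]
          apply mul_le_mul_of_nonneg_right _ (by positivity)
          apply mul_le_mul_of_nonneg_left haal (by positivity)
      _ = β * G^3 * s * ah * ((1+a)*(1+b)) := by ring

lemma fermi_sandwich {β lo hi c c' : ℝ} (hβ : 0 < β)
    (h1 : lo ≤ c) (h2 : c ≤ c') (h3 : c' ≤ hi) (E : ℝ) :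
    β * Real.exp (-(β*(hi-lo))) * (c'-c) * wfn β lo hi E
      ≤ fermi β c' E - fermi β c E ∧
    fermi β c' E - fermi β c E
      ≤ β * Real.exp (3*(β*(hi-lo))) * (c'-c) * wfn β lo hi E := by
  have hs : (0:ℝ) ≤ c' - c := by linarith
  have hba : Real.exp (β*(E-c)) = Real.exp (β*(E-c')) * Real.exp (β*(c'-c)) := by
    rw [← Real.exp_add]; congr 1; ring
  have halG : Real.exp (β*(E-lo)) = Real.exp (β*(E-hi)) * Real.exp (β*(hi-lo)) := by
    rw [← Real.exp_add]; congr 1; ring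
  have hahb : Real.exp (β*(E-hi)) ≤ Real.exp (β*(E-c')) := Real.exp_le_exp.2 (by nlinarith)
  have hba2 : Real.exp (β*(E-c')) ≤ Real.exp (β*(E-c)) := Real.exp_le_exp.2 (by nlinarith)
  have haal : Real.exp (β*(E-c)) ≤ Real.exp (β*(E-lo)) := Real.exp_le_exp.2 (by nlinarith)
  have hG1 : 1 ≤ Real.exp (β*(hi-lo)) := Real.one_le_exp (by nlinarith)
  have key1 : β*(c'-c) + 1 ≤ Real.exp (β*(c'-c)) := Real.add_one_le_exp _
  have key2 : (1 - β*(c'-c)) * Real.exp (β*(c'-c)) ≤ 1 := by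
    have h := Real.add_one_le_exp (-(β*(c'-c)))
    calc (1 - β*(c'-c)) * Real.exp (β*(c'-c))
        ≤ Real.exp (-(β*(c'-c))) * Real.exp (β*(c'-c)) :=
          mul_le_mul_of_nonneg_right (by linarith) (Real.exp_pos _).le
      _ = 1 := by rw [← Real.exp_add]; simp
  have H := sandwich_alg (β := β) (s := c'-c) hβ hs (Real.exp_pos (β*(E-c)))
    (Real.exp_pos (β*(E-c'))) (Real.exp_pos (β*(E-lo))) (Real.exp_pos (β*(E-hi)))
    (Real.exp_pos (β*(hi-lo))) (Real.exp_pos (β*(c'-c))) hba halG hahb hba2 haal hG1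
    key1 key2
  have hD : fermi β c' E - fermi β c E =
      (Real.exp (β*(E-c)) - Real.exp (β*(E-c')))
        / ((1 + Real.exp (β*(E-c))) * (1 + Real.exp (β*(E-c')))) := by
    unfold fermi
    rw [inv_sub_inv (by positivity) (by positivity)]
    have h' : 1 + Real.exp (β * (E - c)) - (1 + Real.exp (β * (E - c'))) =
        Real.exp (β*(E-c)) - Real.exp (β*(E-c')) := by ring
    rw [h']; ring
  have hGinv : Real.exp (-(β*(hi-lo))) = (Real.exp (β*(hi-lo)))⁻¹ := Real.exp_neg _
  have hG3 : Real.exp (3*(β*(hi-lo))) = (Real.exp (β*(hi-lo)))^3 := by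
    rw [← Real.exp_nat_mul]; norm_num
  have hwfn : wfn β lo hi E =
      Real.exp (β*(E-hi)) / (1 + Real.exp (β*(E-lo)))^2 := rfl
  rw [hD, hGinv, hG3, hwfn]
  exact H

lemma exists_poly_exp_bound (η b : ℝ) (hb : 0 < b) :
    ∃ D : ℝ, ∀ x : ℝ, (1 + |x|) ^ η ≤ D * Real.exp (b * |x|) := by
  have h0 : Filter.Tendsto (fun y : ℝ => y ^ η * Real.exp (-b * y)) Filter.atTop (nhds 0) :=
    tendsto_rpow_mul_exp_neg_mul_atTop_nhds_zero η b hb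
  have h1 : Filter.Tendsto (fun x : ℝ => (1 + x) ^ η * Real.exp (-b * (1 + x)))
      Filter.atTop (nhds 0) := h0.comp (Filter.tendsto_atTop_add_const_left _ 1 Filter.tendsto_id)
  have h2 : Filter.Tendsto (fun x : ℝ => (1 + x) ^ η * Real.exp (-b * x))
      Filter.atTop (nhds 0) := by
    have : (fun x : ℝ => (1 + x) ^ η * Real.exp (-b * x)) =
        fun x : ℝ => ((1 + x) ^ η * Real.exp (-b * (1 + x))) * Real.exp b := by
      funext x
      rw [mul_assoc, ← Real.exp_add]
      ring_nf
    rw [this]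
    simpa using h1.mul_const (Real.exp b)
  obtain ⟨x₀, hx₀⟩ := (h2.eventually_le_const (by norm_num : (0:ℝ) < 1)).exists_forall_of_atTop
  -- continuous on [0, max x₀ 0]
  have hcont : ContinuousOn (fun x : ℝ => (1 + x) ^ η * Real.exp (-b * x)) (Icc 0 (max x₀ 0)) := by
    apply ContinuousOn.mul
    · apply ContinuousOn.rpow_const (by fun_prop)
      intro x hx
      left
      have := hx.1
      intro h; nlinarith [h]
    · fun_prop
  obtain ⟨Cb, hCb⟩ := (isCompact_Icc).exists_bound_of_continuousOn hcont
  refine ⟨max Cb 1, fun x => ?_⟩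
  have hx : 0 ≤ |x| := abs_nonneg x
  have key : (1 + |x|) ^ η * Real.exp (-b * |x|) ≤ max Cb 1 := by
    rcases le_or_gt |x| (max x₀ 0) with h | h
    · have := hCb |x| ⟨hx, h⟩
      rw [Real.norm_eq_abs] at this
      calc (1 + |x|) ^ η * Real.exp (-b * |x|)
          ≤ |(1 + |x|) ^ η * Real.exp (-b * |x|)| := le_abs_self _
        _ ≤ Cb := this
        _ ≤ max Cb 1 := le_max_left _ _
    · have := hx₀ |x| (le_trans (le_max_left _ _) h.le)
      exact le_trans this (le_max_right _ _)
  have hepos : 0 < Real.exp (b * |x|) := Real.exp_pos _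
  have : (1 + |x|) ^ η = ((1 + |x|) ^ η * Real.exp (-b * |x|)) * Real.exp (b * |x|) := by
    rw [mul_assoc, ← Real.exp_add]; ring_nf; simp
  rw [this]
  exact mul_le_mul_of_nonneg_right key hepos.le

lemma integrable_master {β : ℝ} (η E₀ : ℝ) (hβ : 0 < β) :
    Integrable (fun E => Set.indicator (Set.Ioi E₀)
      (fun E => Real.exp (-(β*E)) * (1+|E|)^η) E) := by
  rw [integrable_indicator_iff measurableSet_Ioi]
  obtain ⟨D, hD⟩ := exists_poly_exp_bound η (β/2) (by linarith)
  set R := max E₀ 0 with hR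
  have hcont : Continuous (fun E : ℝ => Real.exp (-(β*E)) * (1+|E|)^η) := by
    apply Continuous.mul (by fun_prop)
    apply Continuous.rpow_const (by fun_prop)
    intro x
    left
    have := abs_nonneg x
    intro h; nlinarith [h]
  have hpart1 : IntegrableOn (fun E : ℝ => Real.exp (-(β*E)) * (1+|E|)^η) (Ioc E₀ R) := by
    exact (hcont.integrableOn_Icc).mono_set Ioc_subset_Icc_self
  have hpart2 : IntegrableOn (fun E : ℝ => Real.exp (-(β*E)) * (1+|E|)^η) (Ioi R) := by
    have hbase : IntegrableOn (fun E : ℝ => D * Real.exp (-(β/2) * E)) (Ioi R) :=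
      (exp_neg_integrableOn_Ioi R (by linarith : (0:ℝ) < β/2)).const_mul D
    apply Integrable.mono' hbase (hcont.aestronglyMeasurable.restrict)
    rw [ae_restrict_iff' measurableSet_Ioi]
    filter_upwards with E hE
    have hE0 : 0 ≤ E := le_of_lt (lt_of_le_of_lt (le_max_right E₀ 0) hE)
    have habs : |E| = E := abs_of_nonneg hE0
    have hnn : 0 ≤ Real.exp (-(β*E)) * (1+|E|)^η := by positivity
    rw [Real.norm_eq_abs, abs_of_nonneg hnn]
    calc Real.exp (-(β*E)) * (1+|E|)^η
        ≤ Real.exp (-(β*E)) * (D * Real.exp ((β/2) * |E|)) := by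
          apply mul_le_mul_of_nonneg_left (hD E) (Real.exp_pos _).le
      _ = D * (Real.exp (-(β*E)) * Real.exp ((β/2) * E)) := by rw [habs]; ring
      _ = D * Real.exp (-(β/2) * E) := by rw [← Real.exp_add]; ring_nf
  have hsub : Ioi E₀ ⊆ Ioc E₀ R ∪ Ioi R := by
    intro E hE
    rcases le_or_gt E R with h | h
    · exact Or.inl ⟨hE, h⟩
    · exact Or.inr h
  exact (hpart1.union hpart2).mono_set hsub

lemma sum_split {α : Type*} [AddCommMonoid α] {N p : ℕ} (hp : p ≤ N) (g : Fin N → α) :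
    ∑ i, g i = (∑ i : Fin p, g (Fin.castLE hp i)) +
      ∑ i ∈ Finset.univ.filter (fun i : Fin N => p ≤ (i : ℕ)), g i := by
  have h1 : ∑ i : Fin p, g (Fin.castLE hp i)
      = ∑ i ∈ Finset.univ.filter (fun i : Fin N => (i : ℕ) < p), g i := by
    refine Finset.sum_bij (fun a _ => Fin.castLE hp a) ?_ ?_ ?_ ?_
    · intro a _
      simp only [Finset.mem_filter, Finset.mem_univ, true_and]
      exact a.2
    · intro a _ b _ h
      exact Fin.castLE_injective hp h
    · intro b hb
      simp only [Finset.mem_filter, Finset.mem_univ, true_and] at hb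
      exact ⟨⟨(b : ℕ), hb⟩, Finset.mem_univ _, rfl⟩
    · intros; rfl
  rw [h1, ← Finset.sum_filter_add_sum_filter_not Finset.univ (fun i : Fin N => (i : ℕ) < p) g]
  congr 1
  apply Finset.sum_congr _ (fun _ _ => rfl)
  ext i
  simp [not_lt]

/-- Lemma 2 + Banach fixed point (part (1) of Theorem 1): under Condition (C)
the map `F` is an `ℓ¹`-contraction on the box and the self-consistency
equation `F(X) = X` has a unique solution there. -/
theorem contraction_and_unique_fixed_point_voltage_probes
    (N p : ℕ) (hp : p ≤ N) (β : ℝ) (hβ : 0 < β)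
    (t : Fin N → Fin N → ℝ → ℝ)
    (htmeas : ∀ i j, Measurable (t i j)) (ht : ∀ i j E, 0 ≤ t i j E)
    (M : Fin N → ℝ → ℝ)
    (hMdef : ∀ j E, M j E = ∑ i, t i j E)
    (hrow : ∀ i E, ∑ j, t i j E = M i E)
    (E₀ C η : ℝ)
    (hA : ∀ (j : Fin N) (E : ℝ), E ≤ E₀ → M j E = 0)
    (hB : ∀ (j : Fin N) (E : ℝ), M j E ≤ C * (1 + |E|) ^ η)
    (μ : Fin N → ℝ) (lo hi : ℝ)
    (hlo : IsLeast (μ '' {j : Fin N | p ≤ (j : ℕ)}) lo)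
    (hhi : IsGreatest (μ '' {j : Fin N | p ≤ (j : ℕ)}) hi)
    -- Condition (C): each probe is connected to some thermostat on a set of
    -- positive Lebesgue measure.
    (hCond : ∀ j : Fin p,
      volume {E : ℝ | 0 < ∑ i ∈ Finset.univ.filter (fun i : Fin N => p ≤ (i : ℕ)),
        t i (Fin.castLE hp j) E} ≠ 0)
    (X : Fin p → ℝ → ℝ)
    (hX : ∀ j c, X j c = ∫ E, fermi β c E * M (Fin.castLE hp j) E)
    (inv : Fin p → ℝ → ℝ)
    (hinv1 : ∀ j, ∀ c ∈ Set.Icc lo hi, inv j (X j c) = c)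
    (hinv2 : ∀ j, ∀ x ∈ Set.Icc (X j lo) (X j hi),
      inv j x ∈ Set.Icc lo hi ∧ X j (inv j x) = x)
    (F : (Fin p → ℝ) → (Fin p → ℝ))
    (hF : ∀ x i, F x i =
      (∑ j : Fin p, ∫ E, fermi β (inv j (x j)) E * t (Fin.castLE hp i) (Fin.castLE hp j) E)
      + ∑ j ∈ Finset.univ.filter (fun j : Fin N => p ≤ (j : ℕ)),
          ∫ E, fermi β (μ j) E * t (Fin.castLE hp i) j E) :
    ∃ θ < (1 : ℝ),
      (∀ x y : Fin p → ℝ,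
        (∀ j, x j ∈ Set.Icc (X j lo) (X j hi)) →
        (∀ j, y j ∈ Set.Icc (X j lo) (X j hi)) →
        ∑ j, |F x j - F y j| ≤ θ * ∑ j, |x j - y j|) ∧
      ∃ xs : Fin p → ℝ, (∀ j, xs j ∈ Set.Icc (X j lo) (X j hi)) ∧ F xs = xs ∧
        ∀ y : Fin p → ℝ, (∀ j, y j ∈ Set.Icc (X j lo) (X j hi)) → F y = y → y = xs := by
  classical
  -- trivial case `p = 0`
  rcases Nat.eq_zero_or_pos p with hp0 | hppos
  · subst hp0
    refine ⟨1/2, by norm_num, ?_, ?_⟩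
    · intro x y _ _
      simp
    · exact ⟨fun j => j.elim0, fun j => j.elim0, funext fun j => j.elim0,
        fun y _ _ => funext fun j => j.elim0⟩
  haveI : NeZero p := ⟨Nat.pos_iff_ne_zero.mp hppos⟩
  set J : Finset (Fin N) := Finset.univ.filter (fun j : Fin N => p ≤ (j : ℕ)) with hJ
  set w : ℝ → ℝ := wfn β lo hi with hwdef
  have hlohi : lo ≤ hi := hhi.2 hlo.1
  have hμmem : ∀ j ∈ J, μ j ∈ Set.Icc lo hi := by
    intro j hj
    rw [hJ, Finset.mem_filter] at hj
    exact ⟨hlo.2 ⟨j, hj.2, rfl⟩, hhi.2 ⟨j, hj.2, rfl⟩⟩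
  have hloIcc : lo ∈ Set.Icc lo hi := ⟨le_refl _, hlohi⟩
  have hhiIcc : hi ∈ Set.Icc lo hi := ⟨hlohi, le_refl _⟩
  have hMnn : ∀ j E, 0 ≤ M j E := by
    intro j E
    rw [hMdef]
    exact Finset.sum_nonneg fun i _ => ht i j E
  have htM : ∀ i j E, t i j E ≤ M j E := by
    intro i j E
    rw [hMdef]
    exact Finset.single_le_sum (fun k _ => ht k j E) (Finset.mem_univ i)
  have hMmeas : ∀ j, Measurable (M j) := by
    intro j
    have : M j = fun E => ∑ i, t i j E := funext fun E => hMdef j E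
    rw [this]
    exact Finset.measurable_sum _ fun i _ => htmeas i j
  have hfermi_meas : ∀ c : ℝ, Measurable (fun E => fermi β c E) := by
    intro c
    unfold fermi
    fun_prop
  have hw_meas : Measurable w := by
    rw [hwdef]
    unfold wfn
    fun_prop
  -- key integrability criterion
  have hg₀ : Integrable (fun E => Set.indicator (Set.Ioi E₀)
      (fun E => Real.exp (-(β*E)) * (1+|E|)^η) E) := integrable_master η E₀ hβ
  have keyInt : ∀ (A₀ : ℝ) (f : ℝ → ℝ) (jN : Fin N), 0 ≤ A₀ → Measurable f →
      (∀ E, 0 ≤ f E) → (∀ E, f E ≤ A₀ * Real.exp (-(β*E)) * M jN E) → Integrable f := by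
    intro A₀ f jN hA₀ hmf h0 hbd
    apply Integrable.mono' (hg₀.const_mul (A₀ * max C 0)) hmf.aestronglyMeasurable
    filter_upwards with E
    rw [Real.norm_eq_abs, abs_of_nonneg (h0 E)]
    rcases le_or_gt E E₀ with h | h
    · have hM0 : M jN E = 0 := hA jN E h
      have h1 := hbd E
      rw [hM0, mul_zero] at h1
      have h2 : Set.indicator (Set.Ioi E₀) (fun E => Real.exp (-(β*E)) * (1+|E|)^η) E = 0 :=
        Set.indicator_of_notMem (by simpa using h) _
      rw [h2, mul_zero]
      exact h1
    · have h2 : Set.indicator (Set.Ioi E₀) (fun E => Real.exp (-(β*E)) * (1+|E|)^η) E =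
          Real.exp (-(β*E)) * (1+|E|)^η := Set.indicator_of_mem h _
      have h3 : M jN E ≤ max C 0 * (1+|E|)^η := by
        refine le_trans (hB jN E) ?_
        apply mul_le_mul_of_nonneg_right (le_max_left _ _)
        exact Real.rpow_nonneg (by positivity) η
      calc f E ≤ A₀ * Real.exp (-(β*E)) * M jN E := hbd E
        _ ≤ A₀ * Real.exp (-(β*E)) * (max C 0 * (1+|E|)^η) := by
            apply mul_le_mul_of_nonneg_left h3 (by positivity)
        _ = A₀ * max C 0 * Set.indicator (Set.Ioi E₀)
            (fun E => Real.exp (-(β*E)) * (1+|E|)^η) E := by rw [h2]; ring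
  -- integrability of all relevant integrands
  have int_ft : ∀ c ∈ Set.Icc lo hi, ∀ (i jN : Fin N),
      Integrable (fun E => fermi β c E * t i jN E) := by
    intro c hc i jN
    refine keyInt (Real.exp (β*hi)) _ jN (Real.exp_pos _).le
      ((hfermi_meas c).mul (htmeas i jN))
      (fun E => mul_nonneg (fermi_pos β c E).le (ht i jN E)) (fun E => ?_)
    exact mul_le_mul (fermi_le_exp hβ hi hc.2 E) (htM i jN E)
      (ht i jN E) (by positivity)
  have int_fM : ∀ c ∈ Set.Icc lo hi, ∀ jN : Fin N,
      Integrable (fun E => fermi β c E * M jN E) := by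
    intro c hc jN
    refine keyInt (Real.exp (β*hi)) _ jN (Real.exp_pos _).le
      ((hfermi_meas c).mul (hMmeas jN))
      (fun E => mul_nonneg (fermi_pos β c E).le (hMnn jN E)) (fun E => ?_)
    exact mul_le_mul (fermi_le_exp hβ hi hc.2 E) (le_refl _) (hMnn jN E) (by positivity)
  have hwle : ∀ E, w E ≤ Real.exp (β*(2*lo-hi)) * Real.exp (-(β*E)) := fun E => wfn_le β lo hi E
  have int_wt : ∀ (i jN : Fin N), Integrable (fun E => w E * t i jN E) := by
    intro i jN
    refine keyInt (Real.exp (β*(2*lo-hi))) _ jN (Real.exp_pos _).le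
      (hw_meas.mul (htmeas i jN))
      (fun E => mul_nonneg (wfn_pos β lo hi E).le (ht i jN E)) (fun E => ?_)
    exact mul_le_mul (hwle E) (htM i jN E) (ht i jN E) (by positivity)
  have int_wM : ∀ jN : Fin N, Integrable (fun E => w E * M jN E) := by
    intro jN
    refine keyInt (Real.exp (β*(2*lo-hi))) _ jN (Real.exp_pos _).le
      (hw_meas.mul (hMmeas jN))
      (fun E => mul_nonneg (wfn_pos β lo hi E).le (hMnn jN E)) (fun E => ?_)
    exact mul_le_mul (hwle E) (le_refl _) (hMnn jN E) (by positivity)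
  -- monotonicity of X
  have hXmono : ∀ (j : Fin p) (c c' : ℝ), c ∈ Set.Icc lo hi → c' ∈ Set.Icc lo hi →
      c ≤ c' → X j c ≤ X j c' := by
    intro j c c' hc hc' hcc
    rw [hX, hX]
    apply integral_mono (int_fM c hc _) (int_fM c' hc' _)
    intro E
    exact mul_le_mul_of_nonneg_right (fermi_mono hβ.le hcc E) (hMnn _ E)
  have hXlohi : ∀ j : Fin p, X j lo ≤ X j hi := fun j =>
    hXmono j lo hi hloIcc hhiIcc hlohi
  -- thermostat coupling functions
  set Mt : Fin p → ℝ → ℝ := fun j E => ∑ i ∈ J, t i (Fin.castLE hp j) E with hMtdef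
  have hMt_nn : ∀ j E, 0 ≤ Mt j E := fun j E =>
    Finset.sum_nonneg fun i _ => ht i (Fin.castLE hp j) E
  have hMt_le : ∀ j E, Mt j E ≤ M (Fin.castLE hp j) E := by
    intro j E
    rw [hMdef, sum_split hp (fun i => t i (Fin.castLE hp j) E), hMtdef]
    have : 0 ≤ ∑ i : Fin p, t (Fin.castLE hp i) (Fin.castLE hp j) E :=
      Finset.sum_nonneg fun i _ => ht _ _ E
    rw [hJ]
    linarith
  have int_wMt : ∀ j : Fin p, Integrable (fun E => w E * Mt j E) := by
    intro j
    have : (fun E => w E * Mt j E) = fun E => ∑ i ∈ J, w E * t i (Fin.castLE hp j) E := by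
      funext E
      rw [hMtdef, Finset.mul_sum]
    rw [this]
    exact integrable_finset_sum J fun i _ => int_wt i (Fin.castLE hp j)
  have hMt_meas : ∀ j : Fin p, Measurable (Mt j) :=
    fun j => Finset.measurable_sum _ fun i _ => htmeas i (Fin.castLE hp j)
  -- the positive quantities a j ≤ b j
  set a : Fin p → ℝ := fun j => ∫ E, w E * Mt j E with hadef
  set b : Fin p → ℝ := fun j => ∫ E, w E * M (Fin.castLE hp j) E with hbdef
  have ha_pos : ∀ j, 0 < a j := by
    intro j
    rw [hadef]
    rw [integral_pos_iff_support_of_nonneg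
      (fun E => mul_nonneg (wfn_pos β lo hi E).le (hMt_nn j E)) (int_wMt j)]
    have hsub : {E : ℝ | 0 < Mt j E} ⊆ Function.support (fun E => w E * Mt j E) := by
      intro E hE
      exact ne_of_gt (mul_pos (wfn_pos β lo hi E) hE)
    calc (0:ℝ≥0∞) < volume {E : ℝ | 0 < Mt j E} := by
          rw [pos_iff_ne_zero]
          exact hCond j
      _ ≤ volume (Function.support (fun E => w E * Mt j E)) := measure_mono hsub
  have hab : ∀ j, a j ≤ b j := by
    intro j
    apply integral_mono (int_wMt j) (int_wM _)
    intro E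
    exact mul_le_mul_of_nonneg_left (hMt_le j E) (wfn_pos β lo hi E).le
  have hb_pos : ∀ j, 0 < b j := fun j => lt_of_lt_of_le (ha_pos j) (hab j)
  -- the contraction constants
  set κ : ℝ := β * Real.exp (-(β*(hi-lo))) with hκdef
  set K : ℝ := β * Real.exp (3*(β*(hi-lo))) with hKdef
  have hκpos : 0 < κ := by rw [hκdef]; positivity
  have hKpos : 0 < K := by rw [hKdef]; positivity
  have hκK : κ ≤ K := by
    rw [hκdef, hKdef]
    apply mul_le_mul_of_nonneg_left _ hβ.le
    apply Real.exp_le_exp.2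
    nlinarith
  set ε : Fin p → ℝ := fun j => (κ * a j) / (K * b j) with hεdef
  have hε_pos : ∀ j, 0 < ε j := fun j => div_pos (mul_pos hκpos (ha_pos j))
    (mul_pos hKpos (hb_pos j))
  have hε_le1 : ∀ j, ε j ≤ 1 := by
    intro j
    rw [hεdef, div_le_one (mul_pos hKpos (hb_pos j))]
    exact mul_le_mul hκK (hab j) (ha_pos j).le hKpos.le
  set m : ℝ := Finset.univ.inf' Finset.univ_nonempty ε with hmdef
  have hm_pos : 0 < m := by
    rw [hmdef, Finset.lt_inf'_iff]
    exact fun j _ => hε_pos j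
  have hm_le : ∀ j, m ≤ ε j := fun j => Finset.inf'_le ε (Finset.mem_univ j)
  set θ : ℝ := 1 - m with hθdef
  have hθ1 : θ < 1 := by rw [hθdef]; linarith
  have hθ0 : 0 ≤ θ := by
    rw [hθdef]
    have := hε_le1 ⟨0, hppos⟩
    have := hm_le ⟨0, hppos⟩
    linarith
  -- the contraction estimate
  have contraction : ∀ x y : Fin p → ℝ,
      (∀ j, x j ∈ Set.Icc (X j lo) (X j hi)) →
      (∀ j, y j ∈ Set.Icc (X j lo) (X j hi)) →
      ∑ j, |F x j - F y j| ≤ θ * ∑ j, |x j - y j| := by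
    intro x y hx hy
    obtain ⟨cx, hcx⟩ : ∃ c : Fin p → ℝ, ∀ j, c j = inv j (x j) := ⟨_, fun _ => rfl⟩
    obtain ⟨cy, hcy⟩ : ∃ c : Fin p → ℝ, ∀ j, c j = inv j (y j) := ⟨_, fun _ => rfl⟩
    have hcxI : ∀ j, cx j ∈ Set.Icc lo hi := fun j =>
      (hcx j) ▸ (hinv2 j (x j) (hx j)).1
    have hcyI : ∀ j, cy j ∈ Set.Icc lo hi := fun j =>
      (hcy j) ▸ (hinv2 j (y j) (hy j)).1
    have hXcx : ∀ j, X j (cx j) = x j := fun j =>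
      (hcx j) ▸ (hinv2 j (x j) (hx j)).2
    have hXcy : ∀ j, X j (cy j) = y j := fun j =>
      (hcy j) ▸ (hinv2 j (y j) (hy j)).2
    set d : Fin p → ℝ := fun j => max (cx j) (cy j) with hddef
    set e : Fin p → ℝ := fun j => min (cx j) (cy j) with hedef
    have hdI : ∀ j, d j ∈ Set.Icc lo hi := fun j =>
      ⟨le_trans (hcxI j).1 (le_max_left _ _), max_le (hcxI j).2 (hcyI j).2⟩
    have heI : ∀ j, e j ∈ Set.Icc lo hi := fun j =>
      ⟨le_min (hcxI j).1 (hcyI j).1, le_trans (min_le_left _ _) (hcxI j).2⟩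
    have hed : ∀ j, e j ≤ d j := fun j => min_le_max
    have habsf : ∀ (j : Fin p) (E : ℝ), |fermi β (cx j) E - fermi β (cy j) E|
        = fermi β (d j) E - fermi β (e j) E := by
      intro j E
      rcases le_total (cx j) (cy j) with h | h
      · rw [show d j = cy j from max_eq_right h, show e j = cx j from min_eq_left h,
          abs_of_nonpos (by linarith [fermi_mono hβ.le h E])]
        ring
      · rw [show d j = cx j from max_eq_left h, show e j = cy j from min_eq_right h,
          abs_of_nonneg (by linarith [fermi_mono hβ.le h E])]
    have hXde : ∀ j, X j (d j) - X j (e j) = |x j - y j| := by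
      intro j
      rcases le_total (cx j) (cy j) with h | h
      · rw [show d j = cy j from max_eq_right h, show e j = cx j from min_eq_left h,
          hXcx j, hXcy j, abs_of_nonpos (by
            have := hXmono j (cx j) (cy j) (hcxI j) (hcyI j) h
            rw [hXcx j, hXcy j] at this
            linarith)]
        ring
      · rw [show d j = cx j from max_eq_left h, show e j = cy j from min_eq_right h,
          hXcx j, hXcy j, abs_of_nonneg (by
            have := hXmono j (cy j) (cx j) (hcyI j) (hcxI j) h
            rw [hXcx j, hXcy j] at this
            linarith)]
    have hFx : ∀ i, F x i = (∑ j : Fin p, ∫ E, fermi β (cx j) E *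
        t (Fin.castLE hp i) (Fin.castLE hp j) E)
        + ∑ j ∈ J, ∫ E, fermi β (μ j) E * t (Fin.castLE hp i) j E := by
      intro i
      rw [hF x i]
      simp only [hcx]
    have hFy : ∀ i, F y i = (∑ j : Fin p, ∫ E, fermi β (cy j) E *
        t (Fin.castLE hp i) (Fin.castLE hp j) E)
        + ∑ j ∈ J, ∫ E, fermi β (μ j) E * t (Fin.castLE hp i) j E := by
      intro i
      rw [hF y i]
      simp only [hcy]
    -- Step A
    have stepA : ∀ i : Fin p, |F x i - F y i| ≤ ∑ j : Fin p,
        ∫ E, (fermi β (d j) E - fermi β (e j) E) * t (Fin.castLE hp i) (Fin.castLE hp j) E := by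
      intro i
      have h1 : F x i - F y i = ∑ j : Fin p, ∫ E, (fermi β (cx j) E - fermi β (cy j) E) *
          t (Fin.castLE hp i) (Fin.castLE hp j) E := by
        have h2 : ∀ j ∈ Finset.univ, (∫ E, (fermi β (cx j) E - fermi β (cy j) E) *
            t (Fin.castLE hp i) (Fin.castLE hp j) E)
            = (∫ E, fermi β (cx j) E * t (Fin.castLE hp i) (Fin.castLE hp j) E)
              - ∫ E, fermi β (cy j) E * t (Fin.castLE hp i) (Fin.castLE hp j) E := by
          intro j _
          rw [← integral_sub (int_ft (cx j) (hcxI j) _ _) (int_ft (cy j) (hcyI j) _ _)]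
          exact integral_congr_ae (.of_forall fun E => by simp only [Pi.sub_apply]; ring)
        rw [hFx i, hFy i, Finset.sum_congr rfl h2, Finset.sum_sub_distrib]
        ring
      rw [h1]
      refine le_trans (Finset.abs_sum_le_sum_abs _ _) (Finset.sum_le_sum fun j _ => ?_)
      have h3 : |∫ E, (fermi β (cx j) E - fermi β (cy j) E) *
          t (Fin.castLE hp i) (Fin.castLE hp j) E|
          ≤ ∫ E, |fermi β (cx j) E - fermi β (cy j) E| *
            |t (Fin.castLE hp i) (Fin.castLE hp j) E| := by
        simpa [Real.norm_eq_abs] using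
          norm_integral_le_integral_norm (μ := volume) (fun E => (fermi β (cx j) E -
            fermi β (cy j) E) * t (Fin.castLE hp i) (Fin.castLE hp j) E)
      refine le_trans h3 (le_of_eq ?_)
      refine integral_congr_ae (.of_forall fun E => ?_)
      simp only []
      rw [habsf j E, abs_of_nonneg (ht _ _ E)]
    -- integrability of the difference integrands
    have intDt : ∀ (j : Fin p) (iN jN : Fin N),
        Integrable (fun E => (fermi β (d j) E - fermi β (e j) E) * t iN jN E) := by
      intro j iN jN
      have h := (int_ft (d j) (hdI j) iN jN).sub (int_ft (e j) (heI j) iN jN)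
      exact h.congr (.of_forall fun E => by simp only [Pi.sub_apply]; ring)
    have intDM : ∀ j : Fin p,
        Integrable (fun E => (fermi β (d j) E - fermi β (e j) E) * M (Fin.castLE hp j) E) := by
      intro j
      have h := (int_fM (d j) (hdI j) (Fin.castLE hp j)).sub (int_fM (e j) (heI j) (Fin.castLE hp j))
      exact h.congr (.of_forall fun E => by simp only [Pi.sub_apply]; ring)
    have intDMt : ∀ j : Fin p,
        Integrable (fun E => (fermi β (d j) E - fermi β (e j) E) * Mt j E) := by
      intro j
      have h : (fun E => (fermi β (d j) E - fermi β (e j) E) * Mt j E)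
          = fun E => ∑ i ∈ J, (fermi β (d j) E - fermi β (e j) E) * t i (Fin.castLE hp j) E := by
        funext E
        rw [hMtdef]
        exact Finset.mul_sum _ _ _
      rw [h]
      exact integrable_finset_sum J fun i _ => intDt j i (Fin.castLE hp j)
    -- Step B
    have stepB : ∀ j : Fin p, (∑ i : Fin p,
        ∫ E, (fermi β (d j) E - fermi β (e j) E) * t (Fin.castLE hp i) (Fin.castLE hp j) E)
        ≤ (1 - ε j) * |x j - y j| := by
      intro j
      have step1 : (∑ i : Fin p, ∫ E, (fermi β (d j) E - fermi β (e j) E) *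
          t (Fin.castLE hp i) (Fin.castLE hp j) E)
          = ∫ E, (fermi β (d j) E - fermi β (e j) E) *
            (∑ i : Fin p, t (Fin.castLE hp i) (Fin.castLE hp j) E) := by
        rw [← integral_finset_sum _ (fun i _ => intDt j (Fin.castLE hp i) (Fin.castLE hp j))]
        exact integral_congr_ae (.of_forall fun E => (Finset.mul_sum _ _ _).symm)
      have step2 : ∀ E, (∑ i : Fin p, t (Fin.castLE hp i) (Fin.castLE hp j) E)
          = M (Fin.castLE hp j) E - Mt j E := by
        intro E
        have h := sum_split hp (fun i => t i (Fin.castLE hp j) E)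
        rw [← hMdef, ← hJ] at h
        rw [hMtdef]
        linarith
      have step3 : (∫ E, (fermi β (d j) E - fermi β (e j) E) *
            (∑ i : Fin p, t (Fin.castLE hp i) (Fin.castLE hp j) E))
          = (∫ E, (fermi β (d j) E - fermi β (e j) E) * M (Fin.castLE hp j) E)
            - ∫ E, (fermi β (d j) E - fermi β (e j) E) * Mt j E := by
        rw [← integral_sub (intDM j) (intDMt j)]
        refine integral_congr_ae (.of_forall fun E => ?_)
        simp only [Pi.sub_apply]
        rw [step2 E]
        ring
      have hXd : (∫ E, (fermi β (d j) E - fermi β (e j) E) * M (Fin.castLE hp j) E)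
          = X j (d j) - X j (e j) := by
        rw [hX j (d j), hX j (e j),
          ← integral_sub (int_fM (d j) (hdI j) _) (int_fM (e j) (heI j) _)]
        exact integral_congr_ae (.of_forall fun E => by simp only [Pi.sub_apply]; ring)
      have bound1 : κ * (d j - e j) * a j
          ≤ ∫ E, (fermi β (d j) E - fermi β (e j) E) * Mt j E := by
        have hpt : ∀ E, κ * (d j - e j) * (w E * Mt j E)
            ≤ (fermi β (d j) E - fermi β (e j) E) * Mt j E := by
          intro E
          have h1 : κ * (d j - e j) * w E ≤ fermi β (d j) E - fermi β (e j) E :=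
            (fermi_sandwich hβ (heI j).1 (hed j) (hdI j).2 E).1
          calc κ * (d j - e j) * (w E * Mt j E)
              = (κ * (d j - e j) * w E) * Mt j E := by ring
            _ ≤ (fermi β (d j) E - fermi β (e j) E) * Mt j E :=
                mul_le_mul_of_nonneg_right h1 (hMt_nn j E)
        calc κ * (d j - e j) * a j
            = ∫ E, κ * (d j - e j) * (w E * Mt j E) := by
              rw [integral_const_mul]
          _ ≤ ∫ E, (fermi β (d j) E - fermi β (e j) E) * Mt j E :=
              integral_mono ((int_wMt j).const_mul _) (intDMt j) hpt
      have bound2 : X j (d j) - X j (e j) ≤ K * (d j - e j) * b j := by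
        have hpt : ∀ E, (fermi β (d j) E - fermi β (e j) E) * M (Fin.castLE hp j) E
            ≤ K * (d j - e j) * (w E * M (Fin.castLE hp j) E) := by
          intro E
          have h1 : fermi β (d j) E - fermi β (e j) E ≤ K * (d j - e j) * w E :=
            (fermi_sandwich hβ (heI j).1 (hed j) (hdI j).2 E).2
          calc (fermi β (d j) E - fermi β (e j) E) * M (Fin.castLE hp j) E
              ≤ (K * (d j - e j) * w E) * M (Fin.castLE hp j) E :=
                mul_le_mul_of_nonneg_right h1 (hMnn _ E)
            _ = K * (d j - e j) * (w E * M (Fin.castLE hp j) E) := by ring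
        rw [← hXd]
        calc (∫ E, (fermi β (d j) E - fermi β (e j) E) * M (Fin.castLE hp j) E)
            ≤ ∫ E, K * (d j - e j) * (w E * M (Fin.castLE hp j) E) :=
              integral_mono (intDM j) ((int_wM _).const_mul _) hpt
          _ = K * (d j - e j) * b j := by rw [integral_const_mul]
      have hKbne : (K * b j) ≠ 0 := (mul_pos hKpos (hb_pos j)).ne'
      have hεbound : ε j * |x j - y j|
          ≤ ∫ E, (fermi β (d j) E - fermi β (e j) E) * Mt j E := by
        calc ε j * |x j - y j| = ε j * (X j (d j) - X j (e j)) := by rw [hXde j]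
          _ ≤ ε j * (K * (d j - e j) * b j) :=
              mul_le_mul_of_nonneg_left bound2 (hε_pos j).le
          _ = κ * (d j - e j) * a j := by
              show ((κ * a j) / (K * b j)) * (K * (d j - e j) * b j) = κ * (d j - e j) * a j
              field_simp [(hb_pos j).ne', hKpos.ne']
          _ ≤ _ := bound1
      calc (∑ i : Fin p, ∫ E, (fermi β (d j) E - fermi β (e j) E) *
            t (Fin.castLE hp i) (Fin.castLE hp j) E)
          = (X j (d j) - X j (e j))
            - ∫ E, (fermi β (d j) E - fermi β (e j) E) * Mt j E := by
            rw [step1, step3, hXd]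
        _ = |x j - y j| - ∫ E, (fermi β (d j) E - fermi β (e j) E) * Mt j E := by
            rw [hXde j]
        _ ≤ |x j - y j| - ε j * |x j - y j| := by linarith [hεbound]
        _ = (1 - ε j) * |x j - y j| := by ring
    -- Step C: combine
    calc ∑ i, |F x i - F y i|
        ≤ ∑ i : Fin p, ∑ j : Fin p, ∫ E, (fermi β (d j) E - fermi β (e j) E) *
          t (Fin.castLE hp i) (Fin.castLE hp j) E :=
          Finset.sum_le_sum fun i _ => stepA i
      _ = ∑ j : Fin p, ∑ i : Fin p, ∫ E, (fermi β (d j) E - fermi β (e j) E) *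
          t (Fin.castLE hp i) (Fin.castLE hp j) E := Finset.sum_comm
      _ ≤ ∑ j : Fin p, (1 - ε j) * |x j - y j| := Finset.sum_le_sum fun j _ => stepB j
      _ ≤ ∑ j : Fin p, θ * |x j - y j| := by
          refine Finset.sum_le_sum fun j _ => ?_
          apply mul_le_mul_of_nonneg_right _ (abs_nonneg _)
          have := hm_le j
          rw [hθdef]
          linarith
      _ = θ * ∑ j : Fin p, |x j - y j| := (Finset.mul_sum _ _ _).symm
  refine ⟨θ, hθ1, contraction, ?_⟩
  -- invariance of the box
  have hXrep : ∀ (i : Fin p), ∀ c ∈ Set.Icc lo hi, X i c =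
      (∑ j : Fin p, ∫ E, fermi β c E * t (Fin.castLE hp i) (Fin.castLE hp j) E)
      + ∑ j ∈ J, ∫ E, fermi β c E * t (Fin.castLE hp i) j E := by
    intro i c hc
    rw [hX]
    have h1 : (fun E => fermi β c E * M (Fin.castLE hp i) E)
        = fun E => ∑ jN : Fin N, fermi β c E * t (Fin.castLE hp i) jN E := by
      funext E
      rw [← hrow (Fin.castLE hp i) E, Finset.mul_sum]
    rw [h1, integral_finset_sum _ (fun jN _ => int_ft c hc _ jN),
      sum_split hp (fun jN => ∫ E, fermi β c E * t (Fin.castLE hp i) jN E), ← hJ]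
  have hinv_box : ∀ x : Fin p → ℝ, (∀ j, x j ∈ Set.Icc (X j lo) (X j hi)) →
      ∀ i, F x i ∈ Set.Icc (X i lo) (X i hi) := by
    intro x hxmem i
    have hcI : ∀ j, inv j (x j) ∈ Set.Icc lo hi := fun j => (hinv2 j (x j) (hxmem j)).1
    constructor
    · rw [hXrep i lo hloIcc, hF x i]
      apply add_le_add
      · refine Finset.sum_le_sum fun j _ => ?_
        refine integral_mono (int_ft lo hloIcc _ _) (int_ft _ (hcI j) _ _) fun E => ?_
        exact mul_le_mul_of_nonneg_right (fermi_mono hβ.le (hcI j).1 E) (ht _ _ E)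
      · refine Finset.sum_le_sum fun j hj => ?_
        refine integral_mono (int_ft lo hloIcc _ _) (int_ft _ (hμmem j hj) _ _) fun E => ?_
        exact mul_le_mul_of_nonneg_right (fermi_mono hβ.le (hμmem j hj).1 E) (ht _ _ E)
    · rw [hXrep i hi hhiIcc, hF x i]
      apply add_le_add
      · refine Finset.sum_le_sum fun j _ => ?_
        refine integral_mono (int_ft _ (hcI j) _ _) (int_ft hi hhiIcc _ _) fun E => ?_
        exact mul_le_mul_of_nonneg_right (fermi_mono hβ.le (hcI j).2 E) (ht _ _ E)
      · refine Finset.sum_le_sum fun j hj => ?_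
        refine integral_mono (int_ft _ (hμmem j hj) _ _) (int_ft hi hhiIcc _ _) fun E => ?_
        exact mul_le_mul_of_nonneg_right (fermi_mono hβ.le (hμmem j hj).2 E) (ht _ _ E)
  -- Banach fixed point on the box, viewed inside `ℓ¹(Fin p)`
  set S : Set (PiLp 1 (fun _ : Fin p => ℝ)) :=
    ⋂ j : Fin p, (fun z : PiLp 1 (fun _ : Fin p => ℝ) => z j) ⁻¹'
      (Set.Icc (X j lo) (X j hi)) with hSdef
  have hmemS : ∀ z : PiLp 1 (fun _ : Fin p => ℝ),
      z ∈ S ↔ ∀ j, z j ∈ Set.Icc (X j lo) (X j hi) := by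
    intro z
    rw [hSdef]
    simp [Set.mem_iInter]
  have hSclosed : IsClosed S := by
    rw [hSdef]
    refine isClosed_iInter fun j => IsClosed.preimage ?_ isClosed_Icc
    exact (continuous_apply j).comp (PiLp.continuous_ofLp 1 (fun _ : Fin p => ℝ))
  haveI : CompleteSpace S := hSclosed.completeSpace_coe
  haveI : Nonempty S :=
    ⟨⟨WithLp.toLp 1 (fun j => X j lo : Fin p → ℝ), (hmemS _).2 fun j => ⟨le_refl _, hXlohi j⟩⟩⟩
  have hdist : ∀ u v : PiLp 1 (fun _ : Fin p => ℝ), dist u v = ∑ j, |u j - v j| := by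
    intro u v
    rw [PiLp.dist_eq_sum (by norm_num : 0 < (1:ℝ≥0∞).toReal)]
    simp [Real.dist_eq]
  set G : S → S := fun z =>
    ⟨WithLp.toLp 1 (F z.1 : Fin p → ℝ), (hmemS _).2 fun j => hinv_box z.1 ((hmemS _).1 z.2) j⟩ with hGdef
  have hGcon : ContractingWith θ.toNNReal G := by
    constructor
    · rw [← NNReal.coe_lt_one, Real.coe_toNNReal _ hθ0]
      exact hθ1
    · apply LipschitzWith.of_dist_le_mul
      intro z z'
      rw [Subtype.dist_eq, Subtype.dist_eq, hdist, hdist, Real.coe_toNNReal _ hθ0]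
      exact contraction z.1 z'.1 ((hmemS _).1 z.2) ((hmemS _).1 z'.2)
  obtain ⟨zs, hzs⟩ : ∃ zs : S, Function.IsFixedPt G zs := ⟨_, hGcon.fixedPoint_isFixedPt⟩
  have hzs' : F zs.1 = zs.1 := congrArg (fun z : S => WithLp.ofLp z.1) hzs
  refine ⟨zs.1, (hmemS _).1 zs.2, hzs', ?_⟩
  intro y hy hFy
  have h := contraction y zs.1 hy ((hmemS _).1 zs.2)
  rw [hFy, hzs'] at h
  have hnn : ∀ j ∈ Finset.univ, (0:ℝ) ≤ |y j - zs.1 j| := fun j _ => abs_nonneg _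
  have hsum_nn : 0 ≤ ∑ j, |y j - zs.1 j| := Finset.sum_nonneg hnn
  have hzero : ∑ j, |y j - zs.1 j| = 0 := by
    by_contra h0
    have hpos : 0 < ∑ j, |y j - zs.1 j| := lt_of_le_of_ne hsum_nn (Ne.symm h0)
    have h2 := mul_lt_mul_of_pos_right hθ1 hpos
    rw [one_mul] at h2
    linarith
  funext j
  have h3 := (Finset.sum_eq_zero_iff_of_nonneg hnn).1 hzero j (Finset.mem_univ j)
  have h4 := abs_eq_zero.1 h3
  linarith
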